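/- Let F be an algebraically closed field of characteristic p and λ ∈ Z_p[[t_1,t_2]]. Suppose χ: Z_p[[t_1,t_2]] → F[[t]] is a continuous ring homomorphism with χ(t_1) = 0 and χ(λ) ≠ 0, say χ(λ) has t-adic valuation m. If μ: Z_p[[t_1,t_2]] → F[[t]] is a continuous ring homomorphism satisfying μ(1+t_1) = μ((1+t_2)^{p^j}), μ(t_2) = χ(t_2), and p^j > m, then μ(λ) ≠ 0. -/

import Mathlib

/-- The product topology on `ℤ_p[[t₁,t₂]]` (coefficientwise convergence,
with the `p`-adic topology on the coefficients). -/
noncomputable def mvTop (p : ℕ) [Fact p.Prime] : TopologicalSpace (MvPowerSeries (Fin 2) ℤ_[p]) :=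
  inferInstanceAs (TopologicalSpace ((Fin 2 →₀ ℕ) → ℤ_[p]))

/-- The product topology on `F[[t]]` with `F` discrete; this is the `t`-adic topology. -/
def psTop (F : Type*) : TopologicalSpace (PowerSeries F) :=
  letI : TopologicalSpace F := ⊥
  inferInstanceAs (TopologicalSpace ((Unit →₀ ℕ) → F))

open Filter Finsupp

/-- The `n`-th integer approximation of a multivariate power series over `ℤ_p`:
truncate to monomials of degree at most `n` in each variable, and replace each
coefficient by its integer approximation `appr _ n`. -/
noncomputable def approxPS (p : ℕ) [Fact p.Prime] (f : MvPowerSeries (Fin 2) ℤ_[p]) (n : ℕ) :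
    MvPowerSeries (Fin 2) ℤ_[p] :=
  ∑ ab ∈ Finset.range (n+1) ×ˢ Finset.range (n+1),
    MvPowerSeries.monomial (single 0 ab.1 + single 1 ab.2)
      (((MvPowerSeries.coeff (single 0 ab.1 + single 1 ab.2) f).appr n : ℤ_[p]))

theorem approxPS_coeff (p : ℕ) [Fact p.Prime] (f : MvPowerSeries (Fin 2) ℤ_[p])
    (d : Fin 2 →₀ ℕ) (n : ℕ) (h0 : d 0 ≤ n) (h1 : d 1 ≤ n) :
    MvPowerSeries.coeff d (approxPS p f n) = ((MvPowerSeries.coeff d f).appr n : ℤ_[p]) := by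
  have hd : (single 0 (d 0) + single 1 (d 1) : Fin 2 →₀ ℕ) = d := by
    ext x; fin_cases x <;> simp [single_apply]
  rw [approxPS, map_sum, Finset.sum_eq_single_of_mem (d 0, d 1)
    (by simp only [Finset.mem_product, Finset.mem_range]; omega)]
  · rw [hd, MvPowerSeries.coeff_monomial_same]
  · intro ab _ hab
    apply MvPowerSeries.coeff_monomial_ne
    intro h
    apply hab
    have h0' : d 0 = ab.1 := by rw [h]; simp [single_apply]
    have h1' : d 1 = ab.2 := by rw [h]; simp [single_apply]
    exact Prod.ext h0'.symm h1'.symm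

theorem appr_tendsto (p : ℕ) [Fact p.Prime] (x : ℤ_[p]) :
    Tendsto (fun n => ((x.appr n : ℤ_[p]))) atTop (nhds x) := by
  rw [tendsto_iff_norm_sub_tendsto_zero]
  apply squeeze_zero (fun n => norm_nonneg _) (g := fun n => ((p:ℝ)⁻¹)^n)
  · intro n
    have h := PadicInt.appr_spec n x
    have hle := (PadicInt.norm_le_pow_iff_mem_span_pow (x - (x.appr n : ℤ_[p])) n).mpr h
    calc ‖(x.appr n : ℤ_[p]) - x‖ = ‖x - (x.appr n : ℤ_[p])‖ := by rw [norm_sub_rev]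
    _ ≤ (p:ℝ) ^ (-n:ℤ) := hle
    _ = ((p:ℝ)⁻¹)^n := by rw [zpow_neg, inv_pow, zpow_natCast]
  · apply tendsto_pow_atTop_nhds_zero_of_lt_one (by positivity)
    rw [inv_lt_one_iff₀]
    right
    exact_mod_cast (Fact.out : p.Prime).one_lt

theorem monomial_natCast_eq (p : ℕ) [Fact p.Prime] (a b c : ℕ) :
    (MvPowerSeries.monomial (single 0 a + single 1 b) ((c:ℤ_[p]))
        : MvPowerSeries (Fin 2) ℤ_[p])
      = (c : MvPowerSeries (Fin 2) ℤ_[p]) * (MvPowerSeries.X 0 ^ a * MvPowerSeries.X 1 ^ b) := by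
  rw [MvPowerSeries.X_pow_eq, MvPowerSeries.X_pow_eq, MvPowerSeries.monomial_mul_monomial, mul_one,
    show (c : MvPowerSeries (Fin 2) ℤ_[p]) = MvPowerSeries.C (c:ℤ_[p]) from
      (map_natCast _ c).symm,
    ← MvPowerSeries.monomial_zero_eq_C_apply, MvPowerSeries.monomial_mul_monomial, zero_add,
    mul_one]

/-- Let `χ : ℤ_p[[t₁,t₂]] → F[[t]]` be a continuous ring homomorphism with
`χ(t₁) = 0` and `χ(λ) ≠ 0` of `t`-adic valuation `m`.  If `μ` is a continuous
ring homomorphism with `μ(1+t₁) = μ((1+t₂)^(p^j))`, `μ(t₂) = χ(t₂)` and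
`p^j > m`, then `μ(λ) ≠ 0`. -/
theorem stmt_3 (p : ℕ) [Fact p.Prime]
    (F : Type*) [Field F] [IsAlgClosed F] [CharP F p]
    (lam : MvPowerSeries (Fin 2) ℤ_[p])
    (χ μ : MvPowerSeries (Fin 2) ℤ_[p] →+* PowerSeries F)
    (hχcont : @Continuous _ _ (mvTop p) (psTop F) χ)
    (hμcont : @Continuous _ _ (mvTop p) (psTop F) μ)
    (hχ1 : χ (MvPowerSeries.X 0) = 0)
    (hχlam : χ lam ≠ 0)
    (m : ℕ) (hm : (χ lam).order = m)
    (j : ℕ)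
    (hμ1 : μ (1 + MvPowerSeries.X 0) = μ ((1 + MvPowerSeries.X 1) ^ (p ^ j)))
    (hμ2 : μ (MvPowerSeries.X 1) = χ (MvPowerSeries.X 1))
    (hj : p ^ j > m) :
    μ lam ≠ 0 := by
  letI : TopologicalSpace F := ⊥
  haveI : DiscreteTopology F := ⟨rfl⟩
  letI : TopologicalSpace (MvPowerSeries (Fin 2) ℤ_[p]) := mvTop p
  letI : TopologicalSpace (PowerSeries F) := psTop F
  set N := p ^ j with hN
  -- Step 1: the constant coefficient of `χ (X 1)` vanishes, by continuity.
  have hcc0 : PowerSeries.constantCoeff (χ (MvPowerSeries.X 1)) = 0 := by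
    have hXpow : Filter.Tendsto (fun n => (MvPowerSeries.X 1 : MvPowerSeries (Fin 2) ℤ_[p])^n)
        Filter.atTop (nhds 0) := by
      refine tendsto_pi_nhds.mpr ?_
      intro d
      apply Filter.Tendsto.congr' (f₁ := fun _ => (0:ℤ_[p])) _ tendsto_const_nhds
      filter_upwards [Filter.eventually_gt_atTop (d 1)] with n hn
      have : MvPowerSeries.coeff d (MvPowerSeries.X 1 ^ n : MvPowerSeries (Fin 2) ℤ_[p]) = 0 := by
        rw [MvPowerSeries.coeff_X_pow, if_neg]
        intro h; rw [h] at hn; simp at hn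
      exact this.symm
    have h2 : Filter.Tendsto (fun n => (χ (MvPowerSeries.X 1))^n) Filter.atTop (nhds 0) := by
      have := (hχcont.tendsto 0).comp hXpow
      simpa [Function.comp_def, map_pow] using this
    have hcc : Continuous (fun f : PowerSeries F => PowerSeries.constantCoeff f) :=
      continuous_apply _
    have h3 : Filter.Tendsto (fun n => (PowerSeries.constantCoeff (χ (MvPowerSeries.X 1)))^n)
        Filter.atTop (nhds 0) := by
      have := (hcc.tendsto 0).comp h2
      simpa [Function.comp_def, map_pow] using this
    have h4 : ∀ᶠ n in Filter.atTop,
        (PowerSeries.constantCoeff (χ (MvPowerSeries.X 1)))^n ∈ ({0} : Set F) :=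
      h3.eventually_mem ((isOpen_discrete _).mem_nhds rfl)
    obtain ⟨n, hn1, hn2⟩ := (h4.and (Filter.eventually_ge_atTop 1)).exists
    exact pow_eq_zero_iff (by omega) |>.mp hn1
  -- Step 2: `μ (X 0) = (χ (X 1)) ^ N`.
  haveI : CharP (PowerSeries F) p := charP_of_injective_ringHom PowerSeries.C_injective p
  have hμ0 : μ (MvPowerSeries.X 0) = (χ (MvPowerSeries.X 1)) ^ N := by
    have h := hμ1
    rw [map_add, map_one, map_pow, map_add, map_one, add_pow_char_pow, one_pow, hμ2] at h
    exact add_left_cancel h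
  have hdvdμ0 : (PowerSeries.X : PowerSeries F) ^ N ∣ μ (MvPowerSeries.X 0) := by
    rw [hμ0]
    exact pow_dvd_pow_of_dvd (PowerSeries.X_dvd_iff.mpr hcc0) N
  -- Step 3: the quotient ring homs.
  set I : Ideal (PowerSeries F) := Ideal.span {(PowerSeries.X : PowerSeries F) ^ N} with hI
  set q := Ideal.Quotient.mk I with hq
  set A := q.comp χ with hA
  set B := q.comp μ with hB
  have hiff : ∀ f, A f = B f ↔
      ∀ k < N, PowerSeries.coeff k (χ f) = PowerSeries.coeff k (μ f) := by
    intro f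
    rw [show A f = q (χ f) from rfl, show B f = q (μ f) from rfl, Ideal.Quotient.eq, hI,
      Ideal.mem_span_singleton, PowerSeries.X_pow_dvd_iff]
    simp [map_sub, sub_eq_zero]
  have hS0 : MvPowerSeries.X 0 ∈ A.eqLocus B := by
    show A _ = B _
    have h1 : A (MvPowerSeries.X 0) = 0 := by
      show q (χ (MvPowerSeries.X 0)) = 0; rw [hχ1, map_zero]
    have h2 : B (MvPowerSeries.X 0) = 0 := by
      show q (μ (MvPowerSeries.X 0)) = 0
      rw [Ideal.Quotient.eq_zero_iff_mem, hI]
      exact Ideal.mem_span_singleton.mpr hdvdμ0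
    rw [h1, h2]
  have hS1 : MvPowerSeries.X 1 ∈ A.eqLocus B := by
    show q (χ (MvPowerSeries.X 1)) = q (μ (MvPowerSeries.X 1))
    rw [hμ2]
  -- Step 4: the approximations lie in the equalizer and converge to `lam`.
  have hg_mem : ∀ n, approxPS p lam n ∈ A.eqLocus B := by
    intro n
    apply Subring.sum_mem
    intro ab _
    rw [monomial_natCast_eq]
    exact Subring.mul_mem _ (natCast_mem _ _)
      (Subring.mul_mem _ (Subring.pow_mem _ hS0 _) (Subring.pow_mem _ hS1 _))
  have hg_tendsto : Filter.Tendsto (approxPS p lam) Filter.atTop (nhds lam) := by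
    have hco : ∀ d : Fin 2 →₀ ℕ, Filter.Tendsto
        (fun n => MvPowerSeries.coeff d (approxPS p lam n)) Filter.atTop
        (nhds (MvPowerSeries.coeff d lam)) := by
      intro d
      apply Filter.Tendsto.congr'
        (f₁ := fun n => (((MvPowerSeries.coeff d lam).appr n : ℤ_[p])))
      · filter_upwards [Filter.eventually_ge_atTop (max (d 0) (d 1))] with n hn
        exact (approxPS_coeff p lam d n (le_trans (le_max_left _ _) hn)
          (le_trans (le_max_right _ _) hn)).symm
      · exact appr_tendsto p _
    exact tendsto_pi_nhds.mpr hco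
  have hclosed : IsClosed ((A.eqLocus B : Subring _) : Set (MvPowerSeries (Fin 2) ℤ_[p])) := by
    have heq : ((A.eqLocus B : Subring _) : Set (MvPowerSeries (Fin 2) ℤ_[p])) =
        ⋂ (k : ℕ) (_ : k < N),
          {f | PowerSeries.coeff k (χ f) = PowerSeries.coeff k (μ f)} := by
      ext f
      simp only [SetLike.mem_coe, Set.mem_iInter, Set.mem_setOf_eq]
      exact hiff f
    rw [heq]
    refine isClosed_iInter fun k => isClosed_iInter fun _ => ?_
    exact isClosed_eq ((continuous_apply (single () k)).comp hχcont)
      ((continuous_apply (single () k)).comp hμcont)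
  have hlamS : lam ∈ A.eqLocus B :=
    hclosed.mem_of_tendsto hg_tendsto (Filter.Eventually.of_forall hg_mem)
  -- Step 5: conclude.
  have hfin := (hiff lam).mp hlamS m hj
  have hne : PowerSeries.coeff m (χ lam) ≠ 0 := (PowerSeries.order_eq_nat.mp hm).1
  intro h0
  apply hne
  rw [hfin, h0, map_zero]
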